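/- arXiv:1408.1261 — 3 statements merged into one kernel-verified Lean document; each statement's English description precedes it below -/
import Mathlib

section
/- Let f be an upper triangular n×n partial permutation matrix with dot set D = {(a, f(a)) : f(a) defined}, and let S ⊆ [n] with |S| = n − rank(f). Then for every interval [i,j] ⊆ [n] the inequality |[i,j] ∩ S| ≥ #{(a,b) ∈ D : i ≤ a ≤ b ≤ j} holds if and only if there exists an injective matching m : D → S such that a ≤ m(a,b) ≤ b for each (a,b) ∈ D. -/
open Finset

variable {n : ℕ}

/-- The dots of a partial permutation `f : [n] ⇀ [n]`, as a finite set of pairs. -/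
def dots (f : Fin n → Option (Fin n)) : Finset (Fin n × Fin n) :=
  Finset.univ.filter fun p => f p.1 = some p.2

/-- The rank of a partial permutation: the number of its dots. -/
def pRank (f : Fin n → Option (Fin n)) : ℕ :=
  (Finset.univ.filter fun a => (f a).isSome).card

lemma key_lemma (f : Fin n → Option (Fin n))
    (hupper : ∀ a b : Fin n, f a = some b → a ≤ b)
    (S : Finset (Fin n))
    (H : ∀ i j : Fin n, i ≤ j →
        ((dots f).filter fun p => i ≤ p.1 ∧ p.2 ≤ j).card ≤
          (S ∩ Finset.Icc i j).card) :
    ∀ A : Finset (Fin n × Fin n), A ⊆ dots f →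
      A.card ≤ (S ∩ A.biUnion fun p => Finset.Icc p.1 p.2).card := by
  intro A
  induction A using Finset.strongInduction with
  | _ A ih =>
    intro hA
    rcases A.eq_empty_or_nonempty with rfl | hne
    · simp
    -- every dot has p.1 ≤ p.2
    have hle : ∀ p ∈ A, p.1 ≤ p.2 := by
      intro p hp
      have := hA hp
      simp only [dots, mem_filter] at this
      exact hupper _ _ this.2
    set T := A.biUnion fun p => Finset.Icc p.1 p.2 with hT
    -- maximal second coordinate
    have hne2 : (A.image Prod.snd).Nonempty := hne.image _
    set j := (A.image Prod.snd).max' hne2 with hj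
    obtain ⟨p₀, hp₀A, hp₀j⟩ : ∃ p ∈ A, p.2 = j := by
      have := (A.image Prod.snd).max'_mem hne2
      rw [← hj] at this
      simpa using this
    have hmax : ∀ p ∈ A, p.2 ≤ j := by
      intro p hp
      exact (A.image Prod.snd).le_max' _ (mem_image_of_mem _ hp)
    have hjT : j ∈ T := by
      rw [hT, mem_biUnion]
      exact ⟨p₀, hp₀A, mem_Icc.mpr ⟨hp₀j ▸ hle p₀ hp₀A, hp₀j.ge⟩⟩
    -- candidates
    set C := Finset.univ.filter (fun a : Fin n => Finset.Icc a j ⊆ T) with hC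
    have hjC : j ∈ C := by
      simp only [hC, mem_filter, mem_univ, true_and]
      intro x hx
      simp only [mem_Icc] at hx
      have : x = j := le_antisymm hx.2 hx.1
      rwa [this]
    set i := C.min' ⟨j, hjC⟩ with hi
    have hiC : i ∈ C := C.min'_mem _
    have hijT : Finset.Icc i j ⊆ T := by
      simpa [hC, mem_filter] using hiC
    have hmin : ∀ a : Fin n, Finset.Icc a j ⊆ T → i ≤ a := by
      intro a ha
      exact C.min'_le a (by simp [hC, ha])
    have hij : i ≤ j := C.min'_le j hjC
    set A₁ := A.filter (fun p => i ≤ p.1) with hA₁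
    set A₂ := A.filter (fun p => ¬ i ≤ p.1) with hA₂
    -- dots in A₂ end before i
    have hA₂lt : ∀ p ∈ A₂, p.2 < i := by
      intro p hp
      simp only [hA₂, mem_filter, not_le] at hp
      by_contra hcon
      push_neg at hcon
      have : Finset.Icc p.1 j ⊆ T := by
        intro x hx
        simp only [mem_Icc] at hx
        rcases le_or_gt x p.2 with h | h
        · rw [hT, mem_biUnion]
          exact ⟨p, hp.1, by simp [mem_Icc, hx.1, h]⟩
        · exact hijT (by simp [mem_Icc, hx.2, le_of_lt (lt_of_le_of_lt hcon h)])
      exact absurd (hmin _ this) (not_le.mpr hp.2)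
    have hp₀1 : p₀ ∈ A₁ := by
      have : Finset.Icc p₀.1 j ⊆ T := by
        intro x hx
        rw [hT, mem_biUnion]
        exact ⟨p₀, hp₀A, by rwa [hp₀j]⟩
      simp only [hA₁, mem_filter]
      exact ⟨hp₀A, hmin _ this⟩
    -- A₂ is strictly smaller
    have hA₂ss : A₂ ⊂ A := by
      constructor
      · exact filter_subset _ _
      · intro hsub
        have := hsub hp₀A
        simp only [hA₂, mem_filter] at this
        have h1 : i ≤ p₀.1 := (mem_filter.mp hp₀1).2
        exact this.2 h1
    have ihA₂ := ih A₂ hA₂ss (fun p hp => hA (filter_subset _ _ hp))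
    set T₂ := A₂.biUnion fun p => Finset.Icc p.1 p.2 with hT₂
    have hT₂T : T₂ ⊆ T := biUnion_subset_biUnion_of_subset_left _ (filter_subset _ _)
    have hT₂Iio : ∀ x ∈ T₂, x < i := by
      intro x hx
      rw [hT₂, mem_biUnion] at hx
      obtain ⟨p, hp, hxp⟩ := hx
      simp only [mem_Icc] at hxp
      exact lt_of_le_of_lt hxp.2 (hA₂lt p hp)
    -- A₁ count via hypothesis
    have hA₁card : A₁.card ≤ (S ∩ Finset.Icc i j).card := by
      refine le_trans ?_ (H i j hij)
      apply card_le_card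
      intro p hp
      simp only [hA₁, mem_filter] at hp
      simp only [mem_filter]
      exact ⟨hA hp.1, hp.2, hmax p hp.1⟩
    -- combine
    have hdisj : Disjoint (S ∩ Finset.Icc i j) (S ∩ T₂) := by
      rw [Finset.disjoint_left]
      intro x hx1 hx2
      have h1 : i ≤ x := by
        have := (mem_inter.mp hx1).2
        exact (mem_Icc.mp this).1
      have h2 : x < i := hT₂Iio x (mem_inter.mp hx2).2
      exact absurd h1 (not_le.mpr h2)
    have hsub : (S ∩ Finset.Icc i j) ∪ (S ∩ T₂) ⊆ S ∩ T := by
      intro x hx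
      rcases mem_union.mp hx with h | h
      · exact mem_inter.mpr ⟨(mem_inter.mp h).1, hijT (mem_inter.mp h).2⟩
      · exact mem_inter.mpr ⟨(mem_inter.mp h).1, hT₂T (mem_inter.mp h).2⟩
    calc A.card = A₁.card + A₂.card := by
          rw [hA₁, hA₂]; exact (card_filter_add_card_filter_not _).symm
      _ ≤ (S ∩ Finset.Icc i j).card + (S ∩ T₂).card := Nat.add_le_add hA₁card ihA₂
      _ = ((S ∩ Finset.Icc i j) ∪ (S ∩ T₂)).card := (card_union_of_disjoint hdisj).symm
      _ ≤ (S ∩ T).card := card_le_card hsub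

/-- for an upper triangular partial permutation matrix `f` and a
subset `S` with `|S| = n − rank f`, the interval inequalities
`|[i,j] ∩ S| ≥ #{dots of f inside [i,j]²}` (for all intervals `[i,j]`) hold
iff there is an injective matching sending each dot `(a,b)` to an element
`m(a,b) ∈ S` with `a ≤ m(a,b) ≤ b`. -/
theorem interval_inequalities_iff_matching
    (f : Fin n → Option (Fin n))
    (hupper : ∀ a b : Fin n, f a = some b → a ≤ b)
    (hinj : ∀ a a' b : Fin n, f a = some b → f a' = some b → a = a')
    (S : Finset (Fin n)) (hS : S.card = n - pRank f) :
    (∀ i j : Fin n, i ≤ j →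
        ((dots f).filter fun p => i ≤ p.1 ∧ p.2 ≤ j).card ≤
          (S ∩ Finset.Icc i j).card) ↔
    ∃ m : Fin n × Fin n → Fin n,
      Set.InjOn m (dots f) ∧
      ∀ p ∈ dots f, m p ∈ S ∧ p.1 ≤ m p ∧ m p ≤ p.2 := by
  constructor
  · intro H
    have hall : ∀ s : Finset ↥(dots f),
        s.card ≤ (s.biUnion fun p => S ∩ Finset.Icc p.1.1 p.1.2).card := by
      intro s
      set A := s.image Subtype.val with hAdef
      have hcard : s.card = A.card := (card_image_of_injective _ Subtype.val_injective).symm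
      have hAsub : A ⊆ dots f := by
        intro p hp
        simp only [hAdef, mem_image] at hp
        obtain ⟨q, _, rfl⟩ := hp
        exact q.2
      have heq : s.biUnion (fun p => S ∩ Finset.Icc p.1.1 p.1.2)
          = S ∩ A.biUnion fun p => Finset.Icc p.1 p.2 := by
        ext x
        simp only [mem_biUnion, mem_inter, hAdef, mem_image]
        constructor
        · rintro ⟨q, hq, hxS, hxI⟩
          exact ⟨hxS, ⟨q, ⟨q, hq, rfl⟩, hxI⟩⟩
        · rintro ⟨hxS, p, ⟨q, hq, rfl⟩, hxI⟩
          exact ⟨q, hq, hxS, hxI⟩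
      rw [hcard, heq]
      exact key_lemma f hupper S H A hAsub
    obtain ⟨g, hg_inj, hg⟩ :=
      (Finset.all_card_le_biUnion_card_iff_existsInjective'
        (fun p : ↥(dots f) => S ∩ Finset.Icc p.1.1 p.1.2)).mp hall
    refine ⟨fun p => if h : p ∈ dots f then g ⟨p, h⟩ else p.1, ?_, ?_⟩
    · intro p hp q hq heq
      simp only [Finset.mem_coe] at hp hq
      simp only [dif_pos hp, dif_pos hq] at heq
      exact Subtype.ext_iff.mp (hg_inj heq)
    · intro p hp
      simp only [dif_pos hp]
      have := hg ⟨p, hp⟩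
      simp only [mem_inter, mem_Icc] at this
      exact ⟨this.1, this.2.1, this.2.2⟩
  · rintro ⟨m, hm_inj, hm⟩ i j hij
    apply card_le_card_of_injOn m
    · intro p hp
      simp only [Finset.mem_coe, mem_filter] at hp
      obtain ⟨hpd, hip, hpj⟩ := hp
      obtain ⟨hmS, hm1, hm2⟩ := hm p hpd
      exact mem_inter.mpr ⟨hmS, mem_Icc.mpr ⟨le_trans hip hm1, le_trans hm2 hpj⟩⟩
    · intro p hp q hq heq
      simp only [Finset.mem_coe, mem_filter] at hp hq
      exact hm_inj hp.1 hq.1 heq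
end

section
/- Suppose each dot (a,b) ∈ D requires a groom of height in the interval [a,b], and the groom set S fails Hall's condition (so some set B ⊆ D of brides has fewer than |B| acceptable grooms in S). Then there exists a single interval [a,b] ⊆ [n] such that |S ∩ [a,b]| < #{(x,y) ∈ D : a ≤ x ≤ y ≤ b}. -/
open Finset

private lemma interval_witness_aux {n : ℕ} (D : Finset (Fin n × Fin n))
    (S : Finset (Fin n)) :
    ∀ k (B : Finset (Fin n × Fin n)), B.card ≤ k → B ⊆ D → B.Nonempty →
      (∀ p ∈ B, p.1 ≤ p.2) →
      (B.biUnion fun p => S ∩ Finset.Icc p.1 p.2).card < B.card →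
      ∃ a b : Fin n, a ≤ b ∧
        (S ∩ Finset.Icc a b).card < (D.filter fun p => a ≤ p.1 ∧ p.2 ≤ b).card := by
  intro k
  induction k with
  | zero =>
    intro B hBk _ hne _ _
    rw [Nat.le_zero, Finset.card_eq_zero] at hBk
    simp [hBk] at hne
  | succ k ih =>
    intro B hBk hBD hne hord hdef
    have hfst : (B.image Prod.fst).Nonempty := hne.image _
    have hsnd : (B.image Prod.snd).Nonempty := hne.image _
    set a := (B.image Prod.fst).min' hfst with ha
    set b := (B.image Prod.snd).max' hsnd with hb
    obtain ⟨p0, hp0B, hp0⟩ := Finset.mem_image.mp ((B.image Prod.fst).min'_mem hfst)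
    obtain ⟨p1, hp1B, hp1⟩ := Finset.mem_image.mp ((B.image Prod.snd).max'_mem hsnd)
    have hale : ∀ p ∈ B, a ≤ p.1 := fun p hp =>
      Finset.min'_le _ _ (Finset.mem_image_of_mem _ hp)
    have hble : ∀ p ∈ B, p.2 ≤ b := fun p hp =>
      Finset.le_max' _ _ (Finset.mem_image_of_mem _ hp)
    have hab : a ≤ b :=
      le_trans (hale p0 hp0B) (le_trans (hord p0 hp0B) (hble p0 hp0B))
    by_cases hcov : ∀ g ∈ Finset.Icc a b, ∃ p ∈ B, p.1 ≤ g ∧ g ≤ p.2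
    · refine ⟨a, b, hab, ?_⟩
      have h1 : S ∩ Finset.Icc a b ⊆ B.biUnion fun p => S ∩ Finset.Icc p.1 p.2 := by
        intro x hx
        obtain ⟨hxS, hxI⟩ := Finset.mem_inter.mp hx
        obtain ⟨p, hpB, h1, h2⟩ := hcov x hxI
        exact Finset.mem_biUnion.mpr ⟨p, hpB,
          Finset.mem_inter.mpr ⟨hxS, Finset.mem_Icc.mpr ⟨h1, h2⟩⟩⟩
      have h2 : B ⊆ D.filter fun p => a ≤ p.1 ∧ p.2 ≤ b := fun p hp =>
        Finset.mem_filter.mpr ⟨hBD hp, hale p hp, hble p hp⟩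
      calc (S ∩ Finset.Icc a b).card ≤ _ := Finset.card_le_card h1
        _ < B.card := hdef
        _ ≤ _ := Finset.card_le_card h2
    · push_neg at hcov
      obtain ⟨g, hgI, hg⟩ := hcov
      have hsplit : ∀ p ∈ B, p.2 < g ∨ g < p.1 := by
        intro p hp
        rcases le_or_gt p.1 g with h | h
        · exact Or.inl (hg p hp h)
        · exact Or.inr h
      set B1 := B.filter (fun p => p.2 < g) with hB1
      set B2 := B.filter (fun p => ¬ p.2 < g) with hB2
      have hB2lt : ∀ p ∈ B2, g < p.1 := by
        intro p hp
        obtain ⟨hpB, hpg⟩ := Finset.mem_filter.mp hp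
        exact (hsplit p hpB).resolve_left hpg
      have hB1ne : B1.Nonempty := by
        refine ⟨p0, Finset.mem_filter.mpr ⟨hp0B, ?_⟩⟩
        rcases hsplit p0 hp0B with h | h
        · exact h
        · exact absurd (hp0 ▸ (Finset.mem_Icc.mp hgI).1 : p0.1 ≤ g) (not_le.mpr h)
      have hB2ne : B2.Nonempty := by
        refine ⟨p1, Finset.mem_filter.mpr ⟨hp1B, ?_⟩⟩
        exact not_lt.mpr (hp1 ▸ (Finset.mem_Icc.mp hgI).2 : g ≤ p1.2)
      have hunion : B1 ∪ B2 = B := Finset.filter_union_filter_not_eq _ B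
      have hcardsum : B1.card + B2.card = B.card :=
        Finset.card_filter_add_card_filter_not _
      have hdisj : Disjoint (B1.biUnion fun p => S ∩ Finset.Icc p.1 p.2)
          (B2.biUnion fun p => S ∩ Finset.Icc p.1 p.2) := by
        rw [Finset.disjoint_left]
        intro x hx1 hx2
        obtain ⟨p, hpB1, hxp⟩ := Finset.mem_biUnion.mp hx1
        obtain ⟨q, hqB2, hxq⟩ := Finset.mem_biUnion.mp hx2
        have h1 : x ≤ p.2 := (Finset.mem_Icc.mp (Finset.mem_inter.mp hxp).2).2
        have h2 : q.1 ≤ x := (Finset.mem_Icc.mp (Finset.mem_inter.mp hxq).2).1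
        have h3 : p.2 < g := (Finset.mem_filter.mp hpB1).2
        have h4 : g < q.1 := hB2lt q hqB2
        exact absurd (le_trans h2 (le_trans h1 (le_of_lt h3))) (not_le.mpr h4)
      have hNunion : B.biUnion (fun p => S ∩ Finset.Icc p.1 p.2)
          = (B1.biUnion fun p => S ∩ Finset.Icc p.1 p.2)
            ∪ (B2.biUnion fun p => S ∩ Finset.Icc p.1 p.2) := by
        rw [← hunion]
        ext x
        simp only [Finset.mem_biUnion, Finset.mem_union]
        constructor
        · rintro ⟨p, hp | hp, hx⟩
          exacts [Or.inl ⟨p, hp, hx⟩, Or.inr ⟨p, hp, hx⟩]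
        · rintro (⟨p, hp, hx⟩ | ⟨p, hp, hx⟩)
          exacts [⟨p, Or.inl hp, hx⟩, ⟨p, Or.inr hp, hx⟩]
      have hNcard : (B1.biUnion fun p => S ∩ Finset.Icc p.1 p.2).card
          + (B2.biUnion fun p => S ∩ Finset.Icc p.1 p.2).card
          = (B.biUnion fun p => S ∩ Finset.Icc p.1 p.2).card := by
        rw [hNunion, Finset.card_union_of_disjoint hdisj]
      have hlt1 : B1.card ≤ k := by
        have : B1.card < B.card := by
          refine Finset.card_lt_card ⟨Finset.filter_subset _ _, fun hsub => ?_⟩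
          have h1 := Finset.mem_filter.mp hB2ne.choose_spec
          have := hsub h1.1
          exact h1.2 (Finset.mem_filter.mp this).2
        omega
      have hlt2 : B2.card ≤ k := by
        have : B2.card < B.card := by
          refine Finset.card_lt_card ⟨Finset.filter_subset _ _, fun hsub => ?_⟩
          have := hsub (Finset.mem_filter.mp hB1ne.choose_spec).1
          exact (Finset.mem_filter.mp this).2 (Finset.mem_filter.mp hB1ne.choose_spec).2
        omega
      have hdef' : (B1.biUnion fun p => S ∩ Finset.Icc p.1 p.2).card < B1.card
          ∨ (B2.biUnion fun p => S ∩ Finset.Icc p.1 p.2).card < B2.card := by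
        by_contra hcon
        push_neg at hcon
        omega
      rcases hdef' with h | h
      · exact ih B1 hlt1 ((Finset.filter_subset _ B).trans hBD) hB1ne
          (fun p hp => hord p (Finset.mem_filter.mp hp).1) h
      · exact ih B2 hlt2 ((Finset.filter_subset _ B).trans hBD) hB2ne
          (fun p hp => hord p (Finset.mem_filter.mp hp).1) h

/-- if the brides `D` (each dot `(a,b)` accepting only grooms of
height in `[a,b]`) cannot all be married off injectively into the groom set `S`
(with `|S| = |D|`), then the failure is witnessed by a single interval `[a,b]`:
`|S ∩ [a,b]| < #{(x,y) ∈ D : a ≤ x ≤ y ≤ b}`. -/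
theorem unmarriable_witnessed_by_interval {n : ℕ}
    (D : Finset (Fin n × Fin n)) (hD : ∀ p ∈ D, p.1 ≤ p.2)
    (S : Finset (Fin n)) (hcard : S.card = D.card)
    (hfail : ¬ ∃ m : Fin n × Fin n → Fin n,
        Set.InjOn m D ∧ ∀ p ∈ D, m p ∈ S ∧ p.1 ≤ m p ∧ m p ≤ p.2) :
    ∃ a b : Fin n, a ≤ b ∧
      (S ∩ Finset.Icc a b).card <
        (D.filter fun p => a ≤ p.1 ∧ p.2 ≤ b).card := by
  rcases D.eq_empty_or_nonempty with hDe | hDne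
  · exact absurd ⟨Prod.fst, by simp [hDe, Set.InjOn]⟩ hfail
  obtain ⟨q0, hq0⟩ := hDne
  -- find a deficient B via Hall's theorem
  have hdef : ∃ B ⊆ D, (B.biUnion fun p => S ∩ Finset.Icc p.1 p.2).card < B.card := by
    by_contra hcon
    push_neg at hcon
    have hall : ∀ s : Finset {p // p ∈ D},
        s.card ≤ (s.biUnion fun i => S ∩ Finset.Icc i.1.1 i.1.2).card := by
      intro s
      have himg : (s.image Subtype.val) ⊆ D := by
        intro p hp
        obtain ⟨q, _, rfl⟩ := Finset.mem_image.mp hp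
        exact q.2
      have hc : (s.image Subtype.val).card = s.card :=
        Finset.card_image_of_injective _ Subtype.val_injective
      have hbu : (s.image Subtype.val).biUnion (fun p => S ∩ Finset.Icc p.1 p.2)
          = s.biUnion fun i => S ∩ Finset.Icc i.1.1 i.1.2 := by
        ext x; simp [Finset.mem_biUnion]
      calc s.card = (s.image Subtype.val).card := hc.symm
        _ ≤ ((s.image Subtype.val).biUnion fun p => S ∩ Finset.Icc p.1 p.2).card :=
            hcon _ himg
        _ = _ := by rw [hbu]
    obtain ⟨f, hfinj, hf⟩ :=
      (Finset.all_card_le_biUnion_card_iff_existsInjective'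
        (fun i : {p // p ∈ D} => S ∩ Finset.Icc i.1.1 i.1.2)).mp hall
    refine hfail ⟨fun p => if h : p ∈ D then f ⟨p, h⟩ else f ⟨q0, hq0⟩, ?_, ?_⟩
    · intro p hp q hq hpq
      simp only [Finset.mem_coe] at hp hq
      simp only [dif_pos hp, dif_pos hq] at hpq
      exact congrArg Subtype.val (hfinj hpq)
    · intro p hp
      simp only [dif_pos hp]
      have := hf ⟨p, hp⟩
      rw [Finset.mem_inter, Finset.mem_Icc] at this
      exact ⟨this.1, this.2.1, this.2.2⟩
  obtain ⟨B, hBD, hBdef⟩ := hdef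
  have hBne : B.Nonempty := by
    rcases B.eq_empty_or_nonempty with h | h
    · simp [h] at hBdef
    · exact h
  exact interval_witness_aux D S B.card B le_rfl hBD hBne
    (fun p hp => hD p (hBD hp)) hBdef
end

section
/- Let J be a bounded juggling pattern of length n and ball number k, i.e. a bijection J : ℤ → ℤ with J(i+n) = J(i)+n and i ≤ J(i) ≤ i+n for all i. Let f be the restriction of J to the triangle 1 ≤ i ≤ J(i) ≤ n (an upper triangular partial permutation of rank n−k). Then J is uniquely determined by f together with the requirement that the remaining k dots of J (those with n < J(i) ≤ i+n, 1 ≤ i ≤ n) are arranged Northwest/Southeast, i.e. i < i' implies J(i) < J(i') among those dots. -/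
/-- A bounded juggling pattern of length `n`: a bijection `J : ℤ → ℤ` with
`J(i+n) = J(i)+n` and `i ≤ J(i) ≤ i+n` for all `i`. -/
structure BoundedJugglingPattern (n : ℕ) where
  J : ℤ → ℤ
  bij : Function.Bijective J
  periodic : ∀ i : ℤ, J (i + n) = J i + n
  lower : ∀ i : ℤ, i ≤ J i
  upper : ∀ i : ℤ, J i ≤ i + n

/-- Iterated periodicity. -/
lemma BoundedJugglingPattern.periodic_mul {n : ℕ} (J : BoundedJugglingPattern n)
    (m i : ℤ) : J.J (i + m * n) = J.J i + m * n := by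
  induction m using Int.induction_on with
  | zero => simp
  | succ k ih =>
      have : i + (k + 1 : ℤ) * n = (i + k * n) + n := by ring
      rw [this, J.periodic, ih]; ring
  | pred k ih =>
      have : i + (-k - 1 : ℤ) * n = (i + (-k) * n) - n := by ring
      have h2 : J.J ((i + (-k) * n) - n) + n = J.J (i + (-k) * n) := by
        have := J.periodic ((i + (-k) * n) - n)
        simpa using this.symm
      have h3 : J.J ((i + (-k) * n) - n) = J.J (i + (-k) * n) - n := by linarith
      rw [this, h3, ih]; ring

/-- Two strictly monotone functions on a finite set with equal images agree. -/
lemma eq_of_strictMonoOn_image_eq (f g : ℤ → ℤ) :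
    ∀ s : Finset ℤ, StrictMonoOn f s → StrictMonoOn g s →
      s.image f = s.image g → ∀ x ∈ s, f x = g x := by
  intro s
  induction s using Finset.strongInduction with
  | _ s ih =>
    intro hf hg himg x hx
    have hne : s.Nonempty := ⟨x, hx⟩
    set m := s.min' hne with hm_def
    have hm : m ∈ s := s.min'_mem hne
    have hfm : f m = (s.image f).min' (hne.image f) := by
      apply le_antisymm
      · apply Finset.le_min'
        intro y hy
        obtain ⟨z, hz, rfl⟩ := Finset.mem_image.mp hy
        rcases eq_or_lt_of_le (s.min'_le z hz) with h | h
        · exact le_of_eq (congrArg f h)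
        · exact (hf hm hz h).le
      · exact Finset.min'_le _ _ (Finset.mem_image_of_mem f hm)
    have hgm : g m = (s.image g).min' (hne.image g) := by
      apply le_antisymm
      · apply Finset.le_min'
        intro y hy
        obtain ⟨z, hz, rfl⟩ := Finset.mem_image.mp hy
        rcases eq_or_lt_of_le (s.min'_le z hz) with h | h
        · exact le_of_eq (congrArg g h)
        · exact (hg hm hz h).le
      · exact Finset.min'_le _ _ (Finset.mem_image_of_mem g hm)
    have hfgm : f m = g m := by rw [hfm, hgm]; congr 1
    rcases eq_or_ne x m with rfl | hxm
    · exact hfgm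
    · have hsub : s.erase m ⊂ s := Finset.erase_ssubset hm
      have hsubset : (s.erase m : Set ℤ) ⊆ (s : Set ℤ) := by
        exact_mod_cast Finset.coe_subset.mpr (Finset.erase_subset m s)
      have himg' : (s.erase m).image f = (s.erase m).image g := by
        ext v
        simp only [Finset.mem_image, Finset.mem_erase]
        constructor
        · rintro ⟨z, ⟨hzm, hz⟩, rfl⟩
          have : f z ∈ s.image g := by rw [← himg]; exact Finset.mem_image_of_mem f hz
          obtain ⟨w, hw, hwz⟩ := Finset.mem_image.mp this
          refine ⟨w, ⟨?_, hw⟩, hwz⟩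
          rintro rfl
          exact hzm (hf.injOn hz hm (by rw [← hwz, hfgm]))
        · rintro ⟨z, ⟨hzm, hz⟩, rfl⟩
          have : g z ∈ s.image f := by rw [himg]; exact Finset.mem_image_of_mem g hz
          obtain ⟨w, hw, hwz⟩ := Finset.mem_image.mp this
          refine ⟨w, ⟨?_, hw⟩, hwz⟩
          rintro rfl
          exact hzm (hg.injOn hz hm (by rw [← hwz, ← hfgm]))
      exact ih (s.erase m) hsub (hf.mono hsubset) (hg.mono hsubset) himg' x
        (Finset.mem_erase.mpr ⟨hxm, hx⟩)

/-- Characterization of the outer dot values of a bounded juggling pattern. -/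
lemma outer_image {n : ℕ} (hn : 0 < n) (J : BoundedJugglingPattern n) (v : ℤ) :
    (∃ j : ℤ, (1 ≤ j ∧ j ≤ n) ∧ (n : ℤ) < J.J j ∧ J.J j = v) ↔
    ((n : ℤ) < v ∧ v ≤ 2 * n ∧ ∀ i : ℤ, 1 ≤ i → i ≤ (n : ℤ) → J.J i ≠ v - n) := by
  constructor
  · rintro ⟨j, ⟨hj1, hjn⟩, hjv, rfl⟩
    refine ⟨hjv, by have := J.upper j; linarith, ?_⟩
    intro i hi1 hin hiv
    have : J.J (i + n) = J.J j := by rw [J.periodic, hiv]; ring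
    have hij : i + n = j := J.bij.injective this
    linarith
  · rintro ⟨hv1, hv2, hC⟩
    obtain ⟨j, hj⟩ := J.bij.surjective (v - n)
    have hjl : j ≤ v - n := by have := J.lower j; linarith
    have hju : v - 2 * n ≤ j := by have := J.upper j; linarith
    have hj0 : j ≤ 0 := by
      by_contra h
      push_neg at h
      exact hC j h (by linarith) hj
    refine ⟨j + n, ⟨by linarith, by linarith⟩, ?_, ?_⟩
    · rw [J.periodic, hj]; linarith
    · rw [J.periodic, hj]; ring

/-- uniqueness: a bounded juggling pattern `J` is uniquely
determined by its restriction `f` to the triangle `1 ≤ i ≤ J(i) ≤ n`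
(an upper triangular partial permutation) together with the requirement that
the remaining dots (those with `n < J(i) ≤ i+n` for `1 ≤ i ≤ n`) are arranged
Northwest/Southeast. -/
theorem juggling_pattern_unique (n : ℕ) (hn : 0 < n)
    (J₁ J₂ : BoundedJugglingPattern n)
    -- both have the same partial permutation `f` on the triangle:
    (hsame : ∀ i : ℤ, 1 ≤ i → i ≤ n →
      (J₁.J i ≤ n ↔ J₂.J i ≤ n) ∧ (J₁.J i ≤ n → J₁.J i = J₂.J i))
    -- the dots of `J₁` outside the triangle run NW/SE:
    (hNWSE₁ : ∀ i i' : ℤ, 1 ≤ i → i < i' → i' ≤ n →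
      n < J₁.J i → n < J₁.J i' → J₁.J i < J₁.J i')
    -- the dots of `J₂` outside the triangle run NW/SE:
    (hNWSE₂ : ∀ i i' : ℤ, 1 ≤ i → i < i' → i' ≤ n →
      n < J₂.J i → n < J₂.J i' → J₂.J i < J₂.J i') :
    J₁.J = J₂.J := by
  have hnz : (n : ℤ) ≠ 0 := by exact_mod_cast hn.ne'
  -- key: agreement on [1, n]
  have key : ∀ i : ℤ, 1 ≤ i → i ≤ (n : ℤ) → J₁.J i = J₂.J i := by
    intro i hi1 hin
    by_cases h : J₁.J i ≤ (n : ℤ)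
    · exact (hsame i hi1 hin).2 h
    · push_neg at h
      set S : Finset ℤ := (Finset.Icc (1 : ℤ) n).filter (fun j => (n : ℤ) < J₁.J j) with hS
      have hmemS : ∀ j, j ∈ S ↔ (1 ≤ j ∧ j ≤ (n : ℤ)) ∧ (n : ℤ) < J₁.J j := by
        intro j; simp [hS, Finset.mem_filter, Finset.mem_Icc]
      have hS2 : ∀ j ∈ S, (n : ℤ) < J₂.J j := by
        intro j hj
        rw [hmemS] at hj
        by_contra hc
        push_neg at hc
        exact absurd ((hsame j hj.1.1 hj.1.2).1.mpr hc) (not_le.mpr hj.2)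
      have mono1 : StrictMonoOn J₁.J S := by
        intro a ha b hb hab
        rw [Finset.mem_coe, hmemS] at ha hb
        exact hNWSE₁ a b ha.1.1 hab hb.1.2 ha.2 hb.2
      have mono2 : StrictMonoOn J₂.J S := by
        intro a ha b hb hab
        have ha2 := hS2 a ha
        have hb2 := hS2 b hb
        rw [Finset.mem_coe, hmemS] at ha hb
        exact hNWSE₂ a b ha.1.1 hab hb.1.2 ha2 hb2
      have hmemS2 : ∀ j, j ∈ S ↔ (1 ≤ j ∧ j ≤ (n : ℤ)) ∧ (n : ℤ) < J₂.J j := by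
        intro j
        rw [hmemS]
        constructor
        · rintro ⟨hj, h2⟩
          refine ⟨hj, ?_⟩
          by_contra hc
          push_neg at hc
          exact absurd ((hsame j hj.1 hj.2).1.mpr hc) (not_le.mpr h2)
        · rintro ⟨hj, h2⟩
          refine ⟨hj, ?_⟩
          by_contra hc
          push_neg at hc
          exact absurd ((hsame j hj.1 hj.2).1.mp hc) (not_le.mpr h2)
      have hcond : ∀ v : ℤ,
          ((n : ℤ) < v ∧ v ≤ 2 * n ∧ ∀ i : ℤ, 1 ≤ i → i ≤ (n : ℤ) → J₁.J i ≠ v - n) ↔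
          ((n : ℤ) < v ∧ v ≤ 2 * n ∧ ∀ i : ℤ, 1 ≤ i → i ≤ (n : ℤ) → J₂.J i ≠ v - n) := by
        intro v
        constructor
        · rintro ⟨h1, h2, h3⟩
          refine ⟨h1, h2, ?_⟩
          intro i hi1 hin heq
          have hle : J₂.J i ≤ (n : ℤ) := by linarith
          have hle1 : J₁.J i ≤ (n : ℤ) := (hsame i hi1 hin).1.mpr hle
          exact h3 i hi1 hin (((hsame i hi1 hin).2 hle1).trans heq)
        · rintro ⟨h1, h2, h3⟩
          refine ⟨h1, h2, ?_⟩
          intro i hi1 hin heq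
          have hle1 : J₁.J i ≤ (n : ℤ) := by linarith
          exact h3 i hi1 hin (((hsame i hi1 hin).2 hle1).symm.trans heq)
      have himg : S.image J₁.J = S.image J₂.J := by
        ext v
        simp only [Finset.mem_image]
        constructor
        · rintro ⟨j, hj, rfl⟩
          obtain ⟨hj1, hj2⟩ := (hmemS j).mp hj
          have h1 := (outer_image hn J₁ (J₁.J j)).mp ⟨j, hj1, hj2, rfl⟩
          obtain ⟨j', hj', hj'2, hj'3⟩ := (outer_image hn J₂ (J₁.J j)).mpr ((hcond _).mp h1)
          exact ⟨j', (hmemS2 j').mpr ⟨hj', hj'2⟩, hj'3⟩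
        · rintro ⟨j, hj, rfl⟩
          obtain ⟨hj1, hj2⟩ := (hmemS2 j).mp hj
          have h1 := (outer_image hn J₂ (J₂.J j)).mp ⟨j, hj1, hj2, rfl⟩
          obtain ⟨j', hj', hj'2, hj'3⟩ := (outer_image hn J₁ (J₂.J j)).mpr ((hcond _).mpr h1)
          exact ⟨j', (hmemS j').mpr ⟨hj', hj'2⟩, hj'3⟩
      have hiS : i ∈ S := (hmemS i).mpr ⟨⟨hi1, hin⟩, h⟩
      exact eq_of_strictMonoOn_image_eq J₁.J J₂.J S mono1 mono2 himg i hiS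
  -- extend periodically
  funext i
  have hmod : 0 ≤ (i - 1) % n ∧ (i - 1) % n < n :=
    ⟨Int.emod_nonneg _ hnz, Int.emod_lt_of_pos _ (by exact_mod_cast hn)⟩
  set r := (i - 1) % n + 1 with hr
  set q := (i - 1) / n with hq
  have hi : i = r + q * n := by
    have := Int.mul_ediv_add_emod (i - 1) n
    rw [hr, hq]; linarith
  rw [hi, J₁.periodic_mul, J₂.periodic_mul, key r (by linarith [hmod.1]) (by linarith [hmod.2])]
end
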